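/- For a vector of nonnegative reals α_1,…,α_m and p ∈ [1,2] with q = p/(2−p), the minimum value of ∑_j α_j²/η_j over {η : η_j > 0, ∑_j η_j^q ≤ 1} equals (∑_j α_j^{2q/(q+1)})^{(q+1)/q} = ‖α‖²_{2q/(q+1)}, recovering the squared l_p-type norm. -/

import Mathlib

open scoped BigOperators

theorem variational_lp_norm {m : ℕ} (α : Fin m → ℝ) (hα : ∀ j, 0 < α j)
    (p q : ℝ) (hp1 : 1 ≤ p) (hp2 : p < 2) (hq : q = p / (2 - p)) :
    IsLeast
      {s : ℝ | ∃ η : Fin m → ℝ, (∀ j, 0 < η j) ∧ (∑ j, η j ^ q) ≤ 1 ∧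
        s = ∑ j, α j ^ 2 / η j}
      ((∑ j, α j ^ (2 * q / (q + 1))) ^ ((q + 1) / q)) := by
  have h2p : 0 < 2 - p := by linarith
  have hq0 : 0 < q := by rw [hq]; exact div_pos (by linarith) h2p
  have hq1 : (0:ℝ) < q + 1 := by linarith
  set T := ∑ j, α j ^ (2 * q / (q + 1)) with hT
  have hTnn : 0 ≤ T := Finset.sum_nonneg fun j _ =>
    Real.rpow_nonneg (hα j).le _
  constructor
  · -- membership
    by_cases hm : m = 0
    · subst hm
      refine ⟨fun _ => 1, fun j => one_pos, by simp, ?_⟩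
      simp [hT, Real.zero_rpow (by positivity : (q+1)/q ≠ 0)]
    · have hne : (Finset.univ : Finset (Fin m)).Nonempty := by
        simpa [Finset.univ_nonempty_iff] using Fin.pos_iff_nonempty.mp (Nat.pos_of_ne_zero hm)
      have hTpos : 0 < T := Finset.sum_pos
        (fun j _ => Real.rpow_pos_of_pos (hα j) _) hne
      refine ⟨fun j => α j ^ (2/(q+1)) / T ^ (1/q), ?_, ?_, ?_⟩
      · intro j
        exact div_pos (Real.rpow_pos_of_pos (hα j) _) (Real.rpow_pos_of_pos hTpos _)
      · have : ∀ j, (α j ^ (2/(q+1)) / T ^ (1/q)) ^ q = α j ^ (2*q/(q+1)) / T := by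
          intro j
          rw [Real.div_rpow (Real.rpow_nonneg (hα j).le _) (Real.rpow_nonneg hTnn _),
            ← Real.rpow_mul hTnn, ← Real.rpow_mul (hα j).le,
            one_div_mul_cancel (ne_of_gt hq0), Real.rpow_one]
          congr 1
          ring_nf
        rw [Finset.sum_congr rfl fun j _ => this j, ← Finset.sum_div, ← hT,
          div_self (ne_of_gt hTpos)]
      · have hstep : ∀ j, α j ^ 2 / (α j ^ (2/(q+1)) / T ^ (1/q))
            = α j ^ (2*q/(q+1)) * T ^ (1/q) := by
          intro j
          have he : (2:ℝ) - 2/(q+1) = 2*q/(q+1) := by field_simp; ring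
          rw [div_div_eq_mul_div, mul_div_right_comm, ← Real.rpow_natCast (α j) 2,
            ← Real.rpow_sub (hα j)]
          push_cast
          rw [he]
        rw [Finset.sum_congr rfl fun j _ => hstep j, ← Finset.sum_mul, ← hT]
        rw [show (q+1)/q = 1 + 1/q by field_simp, Real.rpow_add hTpos, Real.rpow_one]
  · -- lower bound
    rintro s ⟨η, hηpos, hηsum, rfl⟩
    set A := ∑ j, α j ^ 2 / η j with hA
    have hAnn : 0 ≤ A := Finset.sum_nonneg fun j _ =>
      div_nonneg (by positivity) (hηpos j).le
    have hconj : Real.HolderConjugate ((q+1)/q) (q+1) := by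
      rw [Real.holderConjugate_iff]
      constructor
      · rw [lt_div_iff₀ hq0]; linarith
      · rw [inv_div]
        field_simp
    have hH := Real.inner_le_Lp_mul_Lq_of_nonneg (s := Finset.univ) hconj
      (f := fun j => (α j ^ 2 / η j) ^ (q/(q+1))) (g := fun j => (η j) ^ (q/(q+1)))
      (fun j _ => Real.rpow_nonneg (div_nonneg (by positivity) (hηpos j).le) _)
      (fun j _ => Real.rpow_nonneg (hηpos j).le _)
    have hlhs : ∀ j, (α j ^ 2 / η j) ^ (q/(q+1)) * (η j) ^ (q/(q+1))
        = α j ^ (2*q/(q+1)) := by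
      intro j
      rw [← Real.mul_rpow (div_nonneg (by positivity) (hηpos j).le) (hηpos j).le,
        div_mul_cancel₀ _ (ne_of_gt (hηpos j)), ← Real.rpow_natCast (α j) 2,
        ← Real.rpow_mul (hα j).le, ← mul_div_assoc]
      norm_num
    have hf : ∀ j, ((α j ^ 2 / η j) ^ (q/(q+1))) ^ ((q+1)/q) = α j ^ 2 / η j := by
      intro j
      rw [← Real.rpow_mul (div_nonneg (by positivity) (hηpos j).le),
        div_mul_div_comm, mul_comm, div_self (by positivity), Real.rpow_one]
    have hg : ∀ j, ((η j) ^ (q/(q+1))) ^ (q+1) = η j ^ q := by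
      intro j
      rw [← Real.rpow_mul (hηpos j).le, div_mul_cancel₀ _ (ne_of_gt hq1)]
    rw [Finset.sum_congr rfl fun j _ => hlhs j,
      Finset.sum_congr rfl fun j _ => hf j,
      Finset.sum_congr rfl fun j _ => hg j,
      show 1/((q+1)/q) = q/(q+1) by rw [one_div_div]] at hH
    have hηnn : 0 ≤ ∑ j, η j ^ q := Finset.sum_nonneg fun j _ =>
      Real.rpow_nonneg (hηpos j).le _
    have h1 : (∑ j, η j ^ q) ^ (1/(q+1)) ≤ 1 :=
      Real.rpow_le_one hηnn hηsum (by positivity)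
    have hTA : T ≤ A ^ (q/(q+1)) := by
      calc T ≤ A ^ (q/(q+1)) * (∑ j, η j ^ q) ^ (1/(q+1)) := hH
        _ ≤ A ^ (q/(q+1)) * 1 := by
            exact mul_le_mul_of_nonneg_left h1 (Real.rpow_nonneg hAnn _)
        _ = A ^ (q/(q+1)) := mul_one _
    calc T ^ ((q+1)/q) ≤ (A ^ (q/(q+1))) ^ ((q+1)/q) :=
          Real.rpow_le_rpow hTnn hTA (by positivity)
      _ = A := by
          rw [← Real.rpow_mul hAnn, div_mul_div_comm, mul_comm, div_self (by positivity),
            Real.rpow_one]
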